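/- Let m be a multiplication on a brace algebra V, with product x·y := (-1)^{|x|+1} m{x,y} and differential dx := m∘x - (-1)^{|x|} x∘m. Then d is a graded derivation of the product: d(x·y) = (dx)·y + (-1)^{deg x} x·(dy), so (V, ·, d) is a differential graded associative algebra. -/

import Mathlib

/-- `(-1)^n` as an integer, for `n : ℤ`. -/
def pSgn (n : ℤ) : ℤ := (((-1 : ℤˣ) ^ n : ℤˣ) : ℤ)

/-- All splittings of a list into a prefix and a suffix. -/
def splits {α : Type*} : List α → List (List α × List α)
  | [] => [([], [])]
  | a :: l => ([], a :: l) :: (splits l).map (fun p => (a :: p.1, p.2))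

/-- Auxiliary enumeration of all interleavings appearing on the right-hand side of the
brace identity.  Elements are paired with their (actual) degree; the reduced degree used
in signs is `deg - 1`.  `b p l` is the inner brace `p.1{l}`. -/
def braceInterAux {V : Type*} (b : V × ℤ → List V → V) :
    ℕ → List (V × ℤ) → List (V × ℤ) → List (ℤ × List V)
  | _, [], ys => [(0, ys.map Prod.fst)]
  | 0, _ :: _, _ => []
  | fuel + 1, x :: xs, ys =>
      (match ys with
        | [] => ([] : List (ℤ × List V))
        | y :: ys' =>
            (braceInterAux b fuel (x :: xs) ys').map
              (fun t => (t.1 + (y.2 - 1) * (((x :: xs).map (fun q => q.2 - 1)).sum),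
                y.1 :: t.2)))
      ++ (splits ys).flatMap (fun p =>
          (braceInterAux b fuel xs p.2).map
            (fun t => (t.1 + ((p.1.map (fun q => q.2 - 1)).sum) *
                ((xs.map (fun q => q.2 - 1)).sum),
              b x (p.1.map Prod.fst) :: t.2)))

/-- The list of signed terms `(ε, [y₁,…,x₁{y_{i₁+1},…,y_{j₁}},…,y_n])` appearing in the
right-hand side of the brace identity
`x{x₁,…,x_m}{y₁,…,y_n} = Σ ± x{y₁,…,x₁{…},…,x_m{…},…,y_n}`. -/
def braceInter {V : Type*} (b : V × ℤ → List V → V)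
    (xs ys : List (V × ℤ)) : List (ℤ × List V) :=
  braceInterAux b (xs.length + ys.length) xs ys

/-- A brace algebra: a graded vector space `V = ⊕ V_n` with multilinear braces
`x{x₁,…,x_n}` of degree `-n` satisfying the brace identity (for homogeneous elements;
the degree of a homogeneous element is recorded in the second component of pairs,
and `|x| = deg x - 1`). -/
structure BraceAlgebraOn (k : Type*) [Field k] (V : Type*) [AddCommGroup V] [Module k V] where
  grading : ℤ → Submodule k V
  brace : V → List V → V
  brace_nil : ∀ x, brace x [] = x
  brace_add_left : ∀ x y l, brace (x + y) l = brace x l + brace y l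
  brace_smul_left : ∀ (c : k) x l, brace (c • x) l = c • brace x l
  brace_add_arg : ∀ x l₁ y z l₂,
    brace x (l₁ ++ (y + z) :: l₂) = brace x (l₁ ++ y :: l₂) + brace x (l₁ ++ z :: l₂)
  brace_smul_arg : ∀ x l₁ (c : k) y l₂,
    brace x (l₁ ++ (c • y) :: l₂) = c • brace x (l₁ ++ y :: l₂)
  brace_deg : ∀ (d : ℤ) (x : V) (l : List (V × ℤ)), x ∈ grading d →
    (∀ p ∈ l, p.1 ∈ grading p.2) →
    brace x (l.map Prod.fst) ∈ grading (d + (l.map Prod.snd).sum - l.length)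
  brace_identity : ∀ (x : V) (xs ys : List (V × ℤ)),
    (∀ p ∈ xs, p.1 ∈ grading p.2) → (∀ p ∈ ys, p.1 ∈ grading p.2) →
    brace (brace x (xs.map Prod.fst)) (ys.map Prod.fst)
      = ((braceInter (fun p l => brace p.1 l) xs ys).map
          (fun t => pSgn t.1 • brace x t.2)).sum

variable {k : Type*} [Field k] {V : Type*} [AddCommGroup V] [Module k V]

/-- The circle product `x ∘ y := x{y}`. -/
def bCirc (B : BraceAlgebraOn k V) (x y : V) : V := B.brace x [y]

/-- The degree `-1` bracket `[x,y] := x∘y - (-1)^{|x||y|} y∘x`, where `a = |x|`, `b = |y|`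
are the desuspended (reduced) degrees. -/
def bBrk (B : BraceAlgebraOn k V) (a b : ℤ) (x y : V) : V :=
  B.brace x [y] - pSgn (a * b) • B.brace y [x]

/-- The differential `d x := m∘x - (-1)^{|x|} x∘m` determined by a multiplication `m`,
where `a = |x|` is the reduced degree of `x`. -/
def bD (B : BraceAlgebraOn k V) (m : V) (a : ℤ) (x : V) : V :=
  B.brace m [x] - pSgn a • B.brace x [m]

/-- The dot product `x·y := (-1)^{|x|+1} m{x,y}` determined by a multiplication `m`,
where `a = |x|` is the reduced degree of `x`. -/
def bDot (B : BraceAlgebraOn k V) (m : V) (a : ℤ) (x y : V) : V :=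
  pSgn (a + 1) • B.brace m [x, y]

section Aux
variable (B : BraceAlgebraOn k V)

private def braceArgHom (x : V) (l₁ l₂ : List V) : V →+ V :=
  AddMonoidHom.mk' (fun y => B.brace x (l₁ ++ y :: l₂)) (fun u v => B.brace_add_arg x l₁ u v l₂)

private def braceLeftHom (l : List V) : V →+ V :=
  AddMonoidHom.mk' (fun x => B.brace x l) (fun u v => B.brace_add_left u v l)

private lemma brace_zero_left (l : List V) : B.brace 0 l = 0 :=
  (braceLeftHom B l).map_zero

private lemma brace_zsmul_left (n : ℤ) (v : V) (l : List V) :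
    B.brace (n • v) l = n • B.brace v l :=
  (braceLeftHom B l).map_zsmul n v

private lemma brace_zsmul_arg1 (x : V) (n : ℤ) (v : V) :
    B.brace x [n • v] = n • B.brace x [v] :=
  (braceArgHom B x [] []).map_zsmul n v

private lemma brace_sub_fst (x u v w : V) :
    B.brace x [u - v, w] = B.brace x [u, w] - B.brace x [v, w] :=
  (braceArgHom B x [] [w]).map_sub u v

private lemma brace_zsmul_fst (x : V) (n : ℤ) (v w : V) :
    B.brace x [n • v, w] = n • B.brace x [v, w] :=
  (braceArgHom B x [] [w]).map_zsmul n v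

private lemma brace_sub_snd (x w u v : V) :
    B.brace x [w, u - v] = B.brace x [w, u] - B.brace x [w, v] :=
  (braceArgHom B x [w] []).map_sub u v

private lemma brace_zsmul_snd (x w : V) (n : ℤ) (v : V) :
    B.brace x [w, n • v] = n • B.brace x [w, v] :=
  (braceArgHom B x [w] []).map_zsmul n v

end Aux

private lemma pSgn_zero : pSgn 0 = 1 := rfl

private lemma pSgn_one : pSgn 1 = -1 := rfl

private lemma pSgn_add (u v : ℤ) : pSgn (u + v) = pSgn u * pSgn v := by
  unfold pSgn; rw [zpow_add]; push_cast; ring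

private lemma pSgn_sub (u v : ℤ) : pSgn (u - v) = pSgn u * pSgn v := by
  have : ((-1 : ℤˣ) ^ v)⁻¹ = (-1 : ℤˣ) ^ v := by
    rcases Int.units_eq_one_or ((-1 : ℤˣ) ^ v) with h | h <;> rw [h] <;> rfl
  unfold pSgn; rw [sub_eq_add_neg, zpow_add, zpow_neg, this]; push_cast; ring

private lemma pSgn_units (n : ℤ) : pSgn n = 1 ∨ pSgn n = -1 := by
  unfold pSgn
  rcases Int.units_eq_one_or ((-1 : ℤˣ) ^ n) with h | h <;> rw [h] <;> simp

/-- If `m` is a multiplication on a brace algebra `V`, then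
`d` is a graded derivation of the dot product:
`d(x·y) = (dx)·y + (-1)^{deg x} x·(dy)`, so `(V, ·, d)` is a DG associative algebra. -/
theorem brace_d_leibniz (B : BraceAlgebraOn k V) (m : V)
    (hm : m ∈ B.grading 2) (hmm : B.brace m [m] = 0) (a b : ℤ) (x y : V)
    (hx : x ∈ B.grading a) (hy : y ∈ B.grading b) :
    bD B m (a + b - 1) (bDot B m (a - 1) x y)
      = bDot B m a (bD B m (a - 1) x) y
        + pSgn a • bDot B m (a - 1) x (bD B m (b - 1) y) := by
  have h1 := B.brace_identity m [(m, 2)] [(x,a),(y,b)]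
    (by intro p hp; simp at hp; rw [hp]; exact hm)
    (by intro p hp; simp at hp; rcases hp with h|h <;> rw [h] <;> assumption)
  simp only [braceInter, braceInterAux, splits, List.map, List.flatMap, List.sum_cons,
    List.sum_nil, List.length, List.append_nil, List.nil_append, List.cons_append,
    List.flatten, B.brace_nil, add_zero, zero_add, mul_one, one_mul, mul_zero, zero_mul] at h1
  rw [hmm, brace_zero_left] at h1
  have h2 := B.brace_identity m [(x,a),(y,b)] [(m, 2)]
    (by intro p hp; simp at hp; rcases hp with h|h <;> rw [h] <;> assumption)
    (by intro p hp; simp at hp; rw [hp]; exact hm)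
  simp only [braceInter, braceInterAux, splits, List.map, List.flatMap, List.sum_cons,
    List.sum_nil, List.length, List.append_nil, List.nil_append, List.cons_append,
    List.flatten, B.brace_nil, add_zero, zero_add, mul_one, one_mul, mul_zero, zero_mul] at h2
  simp only [bD, bDot, brace_zsmul_arg1, brace_zsmul_left, brace_sub_fst, brace_sub_snd,
    brace_zsmul_fst, brace_zsmul_snd] at *
  norm_num [pSgn_add, pSgn_sub, pSgn_zero, pSgn_one] at h1 h2 ⊢
  rcases pSgn_units a with hs | hs <;> rcases pSgn_units b with ht | ht <;>
    rw [hs, ht] at h1 h2 ⊢ <;>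
    [ linear_combination (norm := module) h2 - h1;
      linear_combination (norm := module) -h1 - h2;
      linear_combination (norm := module) h1 + h2;
      linear_combination (norm := module) h1 - h2 ]
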